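/- Let σ(t) = 1/(1 + exp(−t)), let N > 0, γ > 0, δ > 0, T ≥ 0, and let ε satisfy 0 < ε < σ(γN). Let x : ℝ → ℝ be differentiable with x(0) = 0 and x′(t) = exp(−Nδ)·(σ(γN) − x(t)) for all t. If |x(T) − σ(γN)| ≤ ε, then T ≥ exp(Nδ)·log(σ(γN)/ε). -/

import Mathlib

/-- The logistic sigmoid function σ(t) = 1/(1 + exp(−t)). -/
noncomputable def logistic (t : ℝ) : ℝ := 1 / (1 + Real.exp (-t))

/-- Theorem 2(a), lower bound: for the cold-inference dynamics
x′ = exp(−Nδ)·(σ(γN) − x) started at the worst-case state x(0) = 0, achieving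
TVD |x(T) − σ(γN)| ≤ ε < σ(γN) requires T ≥ exp(Nδ)·log(σ(γN)/ε). -/
theorem stmt_4 (N γ δ ε T : ℝ)
    (hN : 0 < N) (hγ : 0 < γ) (hδ : 0 < δ) (hT0 : 0 ≤ T)
    (hε : 0 < ε) (hε' : ε < logistic (γ * N))
    (x : ℝ → ℝ) (hdiff : Differentiable ℝ x)
    (hx0 : x 0 = 0)
    (hode : ∀ t : ℝ, deriv x t = Real.exp (-(N * δ)) * (logistic (γ * N) - x t))
    (hclose : |x T - logistic (γ * N)| ≤ ε) :
    T ≥ Real.exp (N * δ) * Real.log (logistic (γ * N) / ε) := by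
  set k := Real.exp (-(N * δ)) with hk
  set s := logistic (γ * N) with hs
  have hkpos : 0 < k := Real.exp_pos _
  have hspos : 0 < s := lt_trans hε hε'
  set f : ℝ → ℝ := fun t => (x t - s) * Real.exp (k * t) with hf
  have hfderiv : ∀ t, HasDerivAt f 0 t := by
    intro t
    have h1 : HasDerivAt (fun t => x t - s) (k * (s - x t)) t := by
      have := (hdiff t).hasDerivAt
      rw [hode t] at this
      exact this.sub_const s
    have h2 : HasDerivAt (fun t => Real.exp (k * t)) (Real.exp (k * t) * k) t := by
      have := (Real.hasDerivAt_exp (k * t)).comp t ((hasDerivAt_id t).const_mul k)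
      simpa [Function.comp_def] using this
    have := h1.mul h2
    convert this using 1
    · rfl
    · rfl
    · rfl
    ring
  have hconst : f T = f 0 :=
    is_const_of_deriv_eq_zero (fun t => (hfderiv t).differentiableAt)
      (fun t => (hfderiv t).deriv) T 0
  have hf0 : f 0 = -s := by simp [hf, hx0]
  have hxT : x T - s = -s * Real.exp (-(k * T)) := by
    have hfT : (x T - s) * Real.exp (k * T) = -s := by rw [← hf0]; exact hconst
    have := congrArg (· * Real.exp (-(k * T))) hfT
    simpa [mul_assoc, ← Real.exp_add, mul_comm] using this
  have habs : s * Real.exp (-(k * T)) ≤ ε := by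
    rw [hxT] at hclose
    rwa [abs_mul, abs_neg, abs_of_pos hspos, abs_of_pos (Real.exp_pos _)] at hclose
  have hlog : -(k * T) ≤ Real.log (ε / s) := by
    have h1 : Real.exp (-(k * T)) ≤ ε / s := by
      rw [le_div_iff₀ hspos]; linarith [habs, mul_comm s (Real.exp (-(k * T)))]
    calc -(k * T) = Real.log (Real.exp (-(k * T))) := (Real.log_exp _).symm
      _ ≤ Real.log (ε / s) := Real.log_le_log (Real.exp_pos _) h1
  have hlogrw : Real.log (ε / s) = -Real.log (s / ε) := by
    rw [Real.log_div hε.ne' hspos.ne', Real.log_div hspos.ne' hε.ne']; ring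
  rw [hlogrw] at hlog
  have hkT : Real.log (s / ε) ≤ k * T := by linarith
  have hinv : Real.exp (N * δ) = 1 / k := by
    rw [eq_div_iff hkpos.ne', hk, ← Real.exp_add]; simp
  rw [hinv]
  rw [ge_iff_le, div_mul_eq_mul_div, div_le_iff₀ hkpos]
  linarith [mul_comm k T]
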